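/- arXiv:1902.00230 — 2 statements merged into one kernel-verified Lean document; each statement's English description precedes it below -/
import Mathlib

section
/- Two TDRL operations applied to the identity permutation of {1,…,n} with binary patterns b and b' yield the same permutation if and only if b = b' or both b and b' are of the form 1^r 0^{n−r} for some 0 ≤ r ≤ n. -/
/-- The TDRL operation with binary pattern `b` applied to a sequence `l`:
concatenate the entries at positions where `b` is `true` (in order)
with the entries at positions where `b` is `false` (in order). -/
def tdrl (b : List Bool) (l : List ℕ) : List ℕ :=
  ((l.zip b).filter (fun p => p.2)).map Prod.fst ++
  ((l.zip b).filter (fun p => !p.2)).map Prod.fst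

/-- The mirror-TDRL operation: kept entries of the original copy followed by
kept entries of the reversed copy. -/
def mtdrl (b : List Bool) (l : List ℕ) : List ℕ :=
  ((l.zip b).filter (fun p => p.2)).map Prod.fst ++
  (((l.zip b).filter (fun p => !p.2)).map Prod.fst).reverse

/-- The identity permutation `(1, 2, …, n)` as a list. -/
def ident (n : ℕ) : List ℕ := List.range' 1 n

/-- `l` is a permutation of `{1, …, n}`. -/
def IsPermOf (n : ℕ) (l : List ℕ) : Prop := l.Perm (ident n)

/-- Permutations obtainable from `π` by one TDRL operation. -/
def SOut (π : List ℕ) : Set (List ℕ) :=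
  {ρ | ∃ b : List Bool, b.length = π.length ∧ tdrl b π = ρ}

/-- Permutations `ρ` from which `π` is obtainable by one TDRL operation. -/
def SIn (π : List ℕ) : Set (List ℕ) :=
  {ρ | ρ.Perm π ∧ ∃ b : List Bool, b.length = ρ.length ∧ tdrl b ρ = π}

/-- Permutations obtainable from `π` by one MTDRL operation. -/
def SMOut (π : List ℕ) : Set (List ℕ) :=
  {ρ | ∃ b : List Bool, b.length = π.length ∧ mtdrl b π = ρ}

/-- Permutations `ρ` from which `π` is obtainable by one MTDRL operation. -/
def SMIn (π : List ℕ) : Set (List ℕ) :=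
  {ρ | ρ.Perm π ∧ ∃ b : List Bool, b.length = ρ.length ∧ mtdrl b ρ = π}

/-- Permutations obtainable from `π` by one bounded TDRL operation of width `k`. -/
def SOutK (k : ℕ) (π : List ℕ) : Set (List ℕ) :=
  {ρ | ∃ i, ∃ b : List Bool, i + k ≤ π.length ∧ b.length = k ∧
    ρ = π.take i ++ tdrl b ((π.drop i).take k) ++ π.drop (i + k)}

/-- Permutations `ρ` from which `π` is obtainable by one bounded TDRL of width `k`. -/
def SInK (k : ℕ) (π : List ℕ) : Set (List ℕ) :=
  {ρ | ρ.Perm π ∧ ∃ i, ∃ b : List Bool, i + k ≤ ρ.length ∧ b.length = k ∧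
    π = ρ.take i ++ tdrl b ((ρ.drop i).take k) ++ ρ.drop (i + k)}

/-- Permutations obtainable from `π` by one bounded MTDRL operation of width `k`. -/
def SMOutK (k : ℕ) (π : List ℕ) : Set (List ℕ) :=
  {ρ | ∃ i, ∃ b : List Bool, i + k ≤ π.length ∧ b.length = k ∧
    ρ = π.take i ++ mtdrl b ((π.drop i).take k) ++ π.drop (i + k)}

/-- Permutations `ρ` from which `π` is obtainable by one bounded MTDRL of width `k`. -/
def SMInK (k : ℕ) (π : List ℕ) : Set (List ℕ) :=
  {ρ | ρ.Perm π ∧ ∃ i, ∃ b : List Bool, i + k ≤ ρ.length ∧ b.length = k ∧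
    π = ρ.take i ++ mtdrl b ((ρ.drop i).take k) ++ ρ.drop (i + k)}


def Apart (b : List Bool) (l : List ℕ) : List ℕ :=
  ((l.zip b).filter (fun p => p.2)).map Prod.fst

def Bpart (b : List Bool) (l : List ℕ) : List ℕ :=
  ((l.zip b).filter (fun p => !p.2)).map Prod.fst

lemma apart_sublist : ∀ (l : List ℕ) (b : List Bool), List.Sublist (Apart b l) l := by
  intro l
  induction l with
  | nil => intro b; simp [Apart]
  | cons x l ih =>
    intro b
    cases b with
    | nil => simp [Apart]
    | cons t bs =>
      cases t with
      | true => simpa [Apart] using (ih bs).cons₂ x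
      | false => simpa [Apart] using (ih bs).cons x

lemma bpart_sublist : ∀ (l : List ℕ) (b : List Bool), List.Sublist (Bpart b l) l := by
  intro l
  induction l with
  | nil => intro b; simp [Bpart]
  | cons x l ih =>
    intro b
    cases b with
    | nil => simp [Bpart]
    | cons t bs =>
      cases t with
      | true => simpa [Bpart] using (ih bs).cons x
      | false => simpa [Bpart] using (ih bs).cons₂ x

lemma tdrl_perm (b : List Bool) (l : List ℕ) (h : b.length = l.length) :
    (tdrl b l).Perm l := by
  have h1 := List.filter_append_perm (fun p : ℕ × Bool => p.2) (l.zip b)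
  have h2 := h1.map Prod.fst
  rw [List.map_append] at h2
  rwa [List.map_fst_zip (le_of_eq h.symm)] at h2

lemma tdrl_eq (b : List Bool) (l : List ℕ) : tdrl b l = Apart b l ++ Bpart b l := rfl

lemma apart_cons_true (bs : List Bool) (x : ℕ) (l : List ℕ) :
    Apart (true :: bs) (x :: l) = x :: Apart bs l := by simp [Apart]

lemma apart_cons_false (bs : List Bool) (x : ℕ) (l : List ℕ) :
    Apart (false :: bs) (x :: l) = Apart bs l := by simp [Apart]

lemma bpart_cons_true (bs : List Bool) (x : ℕ) (l : List ℕ) :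
    Bpart (true :: bs) (x :: l) = Bpart bs l := by simp [Bpart]

lemma bpart_cons_false (bs : List Bool) (x : ℕ) (l : List ℕ) :
    Bpart (false :: bs) (x :: l) = x :: Bpart bs l := by simp [Bpart]

lemma recover : ∀ (l : List ℕ) (b b' : List Bool), l.Nodup →
    b.length = l.length → b'.length = l.length → Apart b l = Apart b' l → b = b' := by
  intro l
  induction l with
  | nil =>
    intro b b' _ hb hb' _
    simp at hb hb'
    rw [hb, hb']
  | cons x l ih =>
    rintro (_|⟨t,bs⟩) (_|⟨t',bs'⟩) hnd hb hb' hA <;> simp at hb hb'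
    rcases List.nodup_cons.1 hnd with ⟨hx, hnd'⟩
    cases t with
    | true =>
      cases t' with
      | true =>
        rw [apart_cons_true, apart_cons_true] at hA
        rw [ih bs bs' hnd' hb hb' (List.tail_eq_of_cons_eq hA)]
      | false =>
        exfalso
        rw [apart_cons_true, apart_cons_false] at hA
        exact hx ((apart_sublist l bs').mem (by rw [← hA]; simp))
    | false =>
      cases t' with
      | true =>
        exfalso
        rw [apart_cons_false, apart_cons_true] at hA
        exact hx ((apart_sublist l bs).mem (by rw [hA]; simp))
      | false =>
        rw [apart_cons_false, apart_cons_false] at hA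
        rw [ih bs bs' hnd' hb hb' hA]

lemma apart_nil : ∀ (l : List ℕ) (b : List Bool), b.length = l.length →
    Apart b l = [] → b = List.replicate b.length false := by
  intro l
  induction l with
  | nil =>
    intro b hb _
    simp at hb; simp [hb]
  | cons x l ih =>
    rintro (_|⟨t,bs⟩) hb hA
    · simp
    · simp at hb
      cases t with
      | true => rw [apart_cons_true] at hA; simp at hA
      | false =>
        rw [apart_cons_false] at hA
        have := ih bs hb hA
        simp [List.replicate_succ]
        exact this

lemma staircase : ∀ (l : List ℕ) (b : List Bool), l.Pairwise (· < ·) →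
    b.length = l.length → tdrl b l = l →
    ∃ r m, b = List.replicate r true ++ List.replicate m false := by
  intro l
  induction l with
  | nil => intro b _ hb _; simp at hb; exact ⟨0, 0, by simp [hb]⟩
  | cons x l ih =>
    rintro (_|⟨t,bs⟩) hs hb ht
    · simp at hb
    · simp at hb
      cases t with
      | true =>
        rw [tdrl_eq, apart_cons_true, bpart_cons_true, List.cons_append, ← tdrl_eq] at ht
        obtain ⟨r, m, hrm⟩ := ih bs hs.of_cons hb (List.cons_injective.eq_iff.mp ht)
        exact ⟨r + 1, m, by simp [List.replicate_succ, hrm]⟩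
      | false =>
        rw [tdrl_eq, apart_cons_false, bpart_cons_false] at ht
        rcases hA : Apart bs l with _ | ⟨a, as⟩
        · refine ⟨0, bs.length + 1, ?_⟩
          have := apart_nil l bs hb hA
          simp [List.replicate_succ]
          rw [this]; simp
        · exfalso
          rw [hA] at ht
          have hx : a = x := by
            have := congrArg (fun t => t.head?) ht
            simpa using this
          have hmem : a ∈ l := (apart_sublist l bs).mem (by rw [hA]; simp)
          have := (List.pairwise_cons.1 hs).1 a hmem
          omega

lemma apart_replicate_false : ∀ (m : ℕ) (l : List ℕ), Apart (List.replicate m false) l = [] := by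
  intro m
  induction m with
  | zero => intro l; cases l <;> simp [Apart]
  | succ m ih =>
    rintro (_|⟨x,l⟩)
    · simp [Apart]
    · rw [List.replicate_succ, apart_cons_false]; exact ih l

lemma stair_tdrl : ∀ (r m : ℕ) (l : List ℕ), l.length = r + m →
    tdrl (List.replicate r true ++ List.replicate m false) l = l := by
  intro r
  induction r with
  | zero =>
    intro m
    induction m with
    | zero => intro l hl; simp at hl; simp [hl, tdrl]
    | succ m ihm =>
      rintro (_|⟨x,l⟩) hl
      · simp at hl
      · simp at hl
        have := ihm l (by omega)
        rw [tdrl_eq] at this ⊢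
        simp only [List.replicate_succ, List.replicate_zero, List.nil_append] at this ⊢
        rw [apart_cons_false, bpart_cons_false]
        rw [apart_replicate_false] at this ⊢
        simp at this ⊢
        exact this
  | succ r ihr =>
    rintro m (_|⟨x,l⟩) hl
    · simp at hl; omega
    · simp at hl
      have := ihr m l (by omega)
      rw [tdrl_eq] at this ⊢
      simp only [List.replicate_succ, List.cons_append] at this ⊢
      rw [apart_cons_true, bpart_cons_true, List.cons_append]
      rw [this]

lemma split_sorted {A₁ B₁ A₂ B₂ : List ℕ}
    (h : A₁ ++ B₁ = A₂ ++ B₂) (hlt : A₁.length < A₂.length)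
    (s2 : A₂.Pairwise (· < ·)) (sB₁ : B₁.Pairwise (· < ·)) :
    (A₁ ++ B₁).Pairwise (· < ·) := by
  have hA1 : A₁ = A₂.take A₁.length := by
    have h2 : (A₂ ++ B₂).take A₁.length = A₂.take A₁.length :=
      List.take_append_of_le_length (le_of_lt hlt)
    rw [← h2, ← h, List.take_left]
  set m := A₂.drop A₁.length with hm
  have hA₂ : A₂ = A₁ ++ m := by rw [hA1, hm, List.take_append_drop]
  have hB₁ : B₁ = m ++ B₂ := by
    apply List.append_cancel_left (as := A₁)
    rw [h, hA₂, List.append_assoc]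
  have hmne : m ≠ [] := by
    have : m.length = A₂.length - A₁.length := by rw [hm]; simp
    intro hc; rw [hc] at this; simp at this; omega
  rw [hB₁]
  rw [hA₂] at s2
  rw [List.pairwise_append] at s2 ⊢
  obtain ⟨pA₁, pm, crossA⟩ := s2
  refine ⟨pA₁, by rw [hB₁] at sB₁; exact sB₁, ?_⟩
  intro x hx y hy
  rw [List.mem_append] at hy
  rcases hy with hy | hy
  · exact crossA x hx y hy
  · have hz : m.head hmne ∈ m := List.head_mem hmne
    have h1 : x < m.head hmne := crossA x hx _ hz
    have h2 : m.head hmne < y := by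
      rw [hB₁, List.pairwise_append] at sB₁
      exact sB₁.2.2 _ hz y hy
    omega

lemma ident_sorted (n : ℕ) : (ident n).Pairwise (· < ·) := by
  unfold ident
  exact List.pairwise_lt_range' (s := 1) (n := n)

lemma ident_len (n : ℕ) : (ident n).length = n := by simp [ident]

lemma stair_of_sorted (n : ℕ) (c : List Bool) (hc : c.length = n)
    (hs : (tdrl c (ident n)).Pairwise (· < ·)) :
    ∃ r ≤ n, c = List.replicate r true ++ List.replicate (n - r) false := by
  haveI : IsAntisymm ℕ (· < ·) := ⟨fun a b h h' => absurd h' (lt_asymm h)⟩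
  have hperm := tdrl_perm c (ident n) (by rw [hc, ident_len])
  have hid : tdrl c (ident n) = ident n :=
    List.Perm.eq_of_pairwise (fun _ _ _ _ h h' => absurd h' (lt_asymm h)) hs (ident_sorted n) hperm
  obtain ⟨r, m, hrm⟩ := staircase (ident n) c (ident_sorted n) (by rw [hc, ident_len]) hid
  have hlen : r + m = n := by
    have := congrArg List.length hrm
    simp at this; omega
  refine ⟨r, by omega, ?_⟩
  rw [hrm]
  congr 1
  congr 1
  omega

theorem stmt_5 (n : ℕ) (b b' : List Bool) (hb : b.length = n) (hb' : b'.length = n) :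
    tdrl b (ident n) = tdrl b' (ident n) ↔
      b = b' ∨
      ((∃ r ≤ n, b = List.replicate r true ++ List.replicate (n - r) false) ∧
       (∃ r ≤ n, b' = List.replicate r true ++ List.replicate (n - r) false)) := by
  constructor
  · intro h
    have hideq : (ident n).Nodup := by
      have := ident_sorted n
      exact this.nodup
    have h' : Apart b (ident n) ++ Bpart b (ident n)
        = Apart b' (ident n) ++ Bpart b' (ident n) := by
      rw [← tdrl_eq, ← tdrl_eq]; exact h
    rcases lt_trichotomy (Apart b (ident n)).length (Apart b' (ident n)).length with
      hlt | heq | hgt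
    · right
      have hBs : (Bpart b (ident n)).Pairwise (· < ·) :=
        List.Pairwise.sublist (bpart_sublist _ _) (ident_sorted n)
      have hAs' : (Apart b' (ident n)).Pairwise (· < ·) :=
        List.Pairwise.sublist (apart_sublist _ _) (ident_sorted n)
      have hsorted : (tdrl b (ident n)).Pairwise (· < ·) := by
        rw [tdrl_eq]; exact split_sorted h' hlt hAs' hBs
      exact ⟨stair_of_sorted n b hb hsorted,
        stair_of_sorted n b' hb' (h ▸ hsorted)⟩
    · left
      have := List.append_inj h' heq
      exact recover (ident n) b b' hideq (by rw [hb, ident_len]) (by rw [hb', ident_len]) this.1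
    · right
      have hBs : (Bpart b' (ident n)).Pairwise (· < ·) :=
        List.Pairwise.sublist (bpart_sublist _ _) (ident_sorted n)
      have hAs : (Apart b (ident n)).Pairwise (· < ·) :=
        List.Pairwise.sublist (apart_sublist _ _) (ident_sorted n)
      have hsorted : (tdrl b' (ident n)).Pairwise (· < ·) := by
        rw [tdrl_eq]; exact split_sorted h'.symm hgt hAs hBs
      exact ⟨stair_of_sorted n b hb (h.symm ▸ hsorted),
        stair_of_sorted n b' hb' hsorted⟩
  · rintro (rfl | ⟨⟨r, hr, rfl⟩, ⟨r', hr', rfl⟩⟩)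
    · rfl
    · rw [stair_tdrl r (n - r) _ (by rw [ident_len]; omega),
        stair_tdrl r' (n - r') _ (by rw [ident_len]; omega)]
end

section
/- For every n ≥ 1, the number of distinct permutations obtainable from the identity of {1,…,n} by a single mirror TDRL (MTDRL) operation equals 2^{n−1}. -/
def keepL (l : List ℕ) (b : List Bool) : List ℕ :=
  ((l.zip b).filter (fun p => p.2)).map Prod.fst

def dropL (l : List ℕ) (b : List Bool) : List ℕ :=
  ((l.zip b).filter (fun p => !p.2)).map Prod.fst


lemma mtdrl_concat (l : List ℕ) (b : List Bool) (x : ℕ) (c : Bool)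
    (h : l.length = b.length) :
    mtdrl (b ++ [c]) (l ++ [x]) = keepL l b ++ x :: (dropL l b).reverse := by
  unfold mtdrl keepL dropL
  rw [List.zip_append h]
  cases c <;> simp

lemma keepL_subset (l : List ℕ) (b : List Bool) : ∀ x ∈ keepL l b, x ∈ l := by
  intro x hx
  simp only [keepL, List.mem_map, List.mem_filter] at hx
  obtain ⟨p, ⟨hp, _⟩, rfl⟩ := hx
  exact (List.of_mem_zip hp).1

lemma keepL_recover : ∀ (l : List ℕ) (b : List Bool), l.Nodup → b.length = l.length →
    l.map (fun v => decide (v ∈ keepL l b)) = b := by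
  intro l
  induction l with
  | nil => intro b _ hb; simp at hb; simp [hb]
  | cons x l ih =>
    intro b hnd hb
    cases b with
    | nil => simp at hb
    | cons c b' =>
      simp only [List.length_cons, Nat.succ.injEq] at hb
      have hx : x ∉ l := (List.nodup_cons.mp hnd).1
      have hnd' := (List.nodup_cons.mp hnd).2
      have hkey : keepL (x :: l) (c :: b') = (if c then [x] else []) ++ keepL l b' := by
        unfold keepL; cases c <;> simp
      rw [List.map_cons, hkey]
      congr 1
      · cases c <;> simp [keepL_subset l b' x |> fun h => fun hm => hx (h hm)]
        · intro hm; exact hx (keepL_subset l b' x hm)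
      · have heq : (List.map (fun v => decide (v ∈ (if c = true then [x] else []) ++ keepL l b')) l)
            = List.map (fun v => decide (v ∈ keepL l b')) l := by
          apply List.map_congr_left
          intro v hv
          have hvx : v ≠ x := fun h => hx (h ▸ hv)
          cases c <;> simp [hvx]
        rw [heq, ih b' hnd' hb]

lemma takeWhile_eq (p : ℕ → Bool) : ∀ (xs : List ℕ) (y : ℕ) (ys : List ℕ),
    (∀ x ∈ xs, p x = true) → p y = false →
    List.takeWhile p (xs ++ y :: ys) = xs := by
  intro xs
  induction xs with
  | nil => intro y ys _ hy; simp [List.takeWhile, hy]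
  | cons a xs ih =>
    intro y ys hall hy
    have : p a = true := hall a (by simp)
    simp [List.takeWhile, this, ih y ys (fun x hx => hall x (by simp [hx])) hy]


def FF (m : ℕ) (b : List Bool) : List ℕ :=
  keepL (List.range' 1 m) b ++ (1 + m) :: (dropL (List.range' 1 m) b).reverse

lemma ident_concat (m : ℕ) : ident (m + 1) = List.range' 1 m ++ [1 + m] :=
  by unfold ident; exact List.range'_1_concat

lemma main_set_eq (m : ℕ) :
    SMOut (ident (m + 1)) = FF m '' {b : List Bool | b.length = m} := by
  ext ρ
  constructor
  · rintro ⟨b, hb, rfl⟩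
    have hlen : (ident (m+1)).length = m + 1 := by simp [ident]
    rw [hlen] at hb
    have hbne : b ≠ [] := by intro h; simp [h] at hb
    have hb' : b = b.dropLast ++ [b.getLast hbne] := (List.dropLast_append_getLast hbne).symm
    have hdl : b.dropLast.length = m := by simp [hb]
    refine ⟨b.dropLast, hdl, ?_⟩
    conv_rhs => rw [hb']
    rw [ident_concat, mtdrl_concat _ _ _ _ (by simp [hdl])]
    rfl
  · rintro ⟨b, hb, rfl⟩
    have hb : b.length = m := hb
    refine ⟨b ++ [false], by simp [ident, hb], ?_⟩
    rw [ident_concat, mtdrl_concat _ _ _ _ (by simp [hb])]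
    rfl

lemma FF_injOn (m : ℕ) : Set.InjOn (FF m) {b : List Bool | b.length = m} := by
  intro b₁ h₁ b₂ h₂ heq
  have h₁ : b₁.length = m := h₁
  have h₂ : b₂.length = m := h₂
  have hk : keepL (List.range' 1 m) b₁ = keepL (List.range' 1 m) b₂ := by
    have e1 : List.takeWhile (fun v => decide (v < 1 + m)) (FF m b₁)
        = keepL (List.range' 1 m) b₁ := by
      apply takeWhile_eq
      · intro x hx
        have := keepL_subset _ _ x hx
        simp only [List.mem_range'_1] at this
        simp; omega
      · simp
    have e2 : List.takeWhile (fun v => decide (v < 1 + m)) (FF m b₂)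
        = keepL (List.range' 1 m) b₂ := by
      apply takeWhile_eq
      · intro x hx
        have := keepL_subset _ _ x hx
        simp only [List.mem_range'_1] at this
        simp; omega
      · simp
    rw [← e1, ← e2, heq]
  have r1 := keepL_recover (List.range' 1 m) b₁ List.nodup_range' (by simp [h₁])
  have r2 := keepL_recover (List.range' 1 m) b₂ List.nodup_range' (by simp [h₂])
  rw [← r1, ← r2, hk]

lemma length_set_eq (m : ℕ) :
    {b : List Bool | b.length = m} = Set.range (List.ofFn : (Fin m → Bool) → List Bool) := by
  ext b
  constructor
  · intro hb
    have hb : b.length = m := hb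
    refine ⟨fun i => b[i.val]'(by simp [hb, i.isLt]), ?_⟩
    apply List.ext_getElem (by simpa using hb.symm)
    intro i hi₁ hi₂
    simp
  · rintro ⟨f, rfl⟩
    simp

lemma main_card (m : ℕ) : (SMOut (ident (m + 1))).ncard = 2 ^ m := by
  rw [main_set_eq, Set.ncard_image_of_injOn (FF_injOn m), length_set_eq,
    ← Set.image_univ, Set.ncard_image_of_injOn]
  · rw [Set.ncard_univ]
    simp only [Nat.card_eq_fintype_card, Fintype.card_fun, Fintype.card_bool,
      Fintype.card_fin]
  · exact fun x _ y _ h => List.ofFn_injective h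

theorem stmt_14 (n : ℕ) (hn : 1 ≤ n) :
    (SMOut (ident n)).ncard = 2 ^ (n - 1) := by
  obtain ⟨m, rfl⟩ : ∃ m, n = m + 1 := ⟨n - 1, (Nat.succ_pred_eq_of_pos hn).symm⟩
  simpa using main_card m
end
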